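/- For integers k ≥ r ≥ 3 and reals 0 < x < y ≤ 1/(r−1), g(x) + g(y) − xk·C(1/x, r) ≤ g(x+y), where g(x) = (1/2)·Σ_{i=0}^∞ xk·C(1/(2^i x), r) and C(·,r) is the extended binomial coefficient. -/

import Mathlib

/-- The extended binomial coefficient: `z(z-1)⋯(z-r+1)/r!` when `z ≥ r-1`, and `0` otherwise. -/
noncomputable def extBinom (z : ℝ) (r : ℕ) : ℝ :=
  if (r : ℝ) - 1 ≤ z then (∏ j ∈ Finset.range r, (z - (j : ℝ))) / (Nat.factorial r) else 0

/-- `g(x) = (1/2) Σ_{i≥0} x k C(1/(2^i x), r)` -/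
noncomputable def gFun (k r : ℕ) (x : ℝ) : ℝ :=
  (1 / 2) * ∑' i : ℕ, x * (k : ℝ) * extBinom (1 / (2 ^ i * x)) r

namespace GSuper

noncomputable def F (k r : ℕ) (x : ℝ) : ℝ := x * (k : ℝ) * extBinom (1 / x) r

lemma extBinom_nonneg (z : ℝ) (r : ℕ) : 0 ≤ extBinom z r := by
  unfold extBinom
  split_ifs with h
  · apply div_nonneg _ (by positivity)
    apply Finset.prod_nonneg
    intro j hj
    have hj' : (j : ℝ) + 1 ≤ (r : ℝ) := by exact_mod_cast Finset.mem_range.mp hj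
    linarith
  · exact le_refl 0

lemma F_nonneg (k r : ℕ) {x : ℝ} (hx : 0 ≤ x) : 0 ≤ F k r x := by
  have := extBinom_nonneg (1 / x) r
  unfold F; positivity

lemma extBinom_eq_zero {z : ℝ} {r : ℕ} (h : z < (r : ℝ) - 1) : extBinom z r = 0 := by
  unfold extBinom
  rw [if_neg (not_le.mpr h)]

/-- The product-of-maxes form of `F` for positive `x`. -/
lemma F_eq (k r : ℕ) (hr : 3 ≤ r) {x : ℝ} (hx : 0 < x) :
    F k r x = ((k : ℝ) / (Nat.factorial r)) *
      ∏ j ∈ Finset.range (r - 1), max (1 / x - ((j : ℝ) + 1)) 0 := by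
  obtain ⟨m, rfl⟩ : ∃ m, r = m + 1 := ⟨r - 1, by omega⟩
  have hm : 2 ≤ m := by omega
  unfold F extBinom
  split_ifs with h
  · have hprod : ∏ j ∈ Finset.range (m + 1), (1 / x - (j : ℝ)) =
        (∏ j ∈ Finset.range m, (1 / x - ((j : ℝ) + 1))) * (1 / x) := by
      rw [Finset.prod_range_succ']
      congr 1
      · exact Finset.prod_congr rfl (fun j _ => by push_cast; ring)
      · norm_num
    have hmax : ∀ j ∈ Finset.range m, max (1 / x - ((j : ℝ) + 1)) 0 =
        1 / x - ((j : ℝ) + 1) := by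
      intro j hj
      have hj' : (j : ℝ) + 1 ≤ (m : ℝ) := by exact_mod_cast Finset.mem_range.mp hj
      have : (↑(m + 1) : ℝ) - 1 = (m : ℝ) := by push_cast; ring
      rw [max_eq_left]
      rw [this] at h
      linarith
    simp only [Nat.add_sub_cancel]
    rw [Finset.prod_congr rfl hmax, hprod]
    field_simp
  · push_neg at h
    have hlast : max (1 / x - ((↑(m - 1) : ℝ) + 1)) 0 = 0 := by
      have : (↑(m - 1) : ℝ) + 1 = (m : ℝ) := by
        have : m - 1 + 1 = m := by omega
        exact_mod_cast congrArg (Nat.cast : ℕ → ℝ) this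
      rw [this, max_eq_right]
      have : (↑(m + 1) : ℝ) - 1 = (m : ℝ) := by push_cast; ring
      rw [this] at h
      linarith
    have hmem : m - 1 ∈ Finset.range m := Finset.mem_range.mpr (by omega)
    simp only [Nat.add_sub_cancel]
    rw [Finset.prod_eq_zero hmem hlast]
    ring

lemma factor_antitoneOn (c : ℝ) :
    AntitoneOn (fun x : ℝ => max (1 / x - c) 0) (Set.Ioi 0) := by
  intro a ha b hb hab
  simp only
  apply max_le_max _ le_rfl
  have := one_div_le_one_div_of_le ha hab
  linarith

lemma factor_nonneg (c x : ℝ) : 0 ≤ max (1 / x - c) 0 := le_max_right _ _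

lemma factor_convexOn (c : ℝ) :
    ConvexOn ℝ (Set.Ioi 0) (fun x : ℝ => max (1 / x - c) 0) := by
  have h1 : ConvexOn ℝ (Set.Ioi (0 : ℝ)) (fun x : ℝ => 1 / x - c) := by
    have := convexOn_zpow (𝕜 := ℝ) (-1)
    have h2 : ConvexOn ℝ (Set.Ioi (0 : ℝ)) (fun x : ℝ => 1 / x) := by
      simpa [zpow_neg_one, one_div] using this
    exact h2.sub (concaveOn_const _ (convex_Ioi 0))
  exact h1.sup (convexOn_const _ (convex_Ioi 0))

lemma prod_antitoneOn (m : ℕ) :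
    AntitoneOn (fun x : ℝ => ∏ j ∈ Finset.range m, max (1 / x - ((j : ℝ) + 1)) 0)
      (Set.Ioi 0) := by
  intro a ha b hb hab
  simp only
  apply Finset.prod_le_prod
  · intro j _; exact factor_nonneg _ _
  · intro j _; exact factor_antitoneOn _ ha hb hab

lemma antitone_monovaryOn {f g : ℝ → ℝ} {s : Set ℝ} (hf : AntitoneOn f s)
    (hg : AntitoneOn g s) : MonovaryOn f g s := by
  intro a ha b hb hgab
  rcases le_total a b with h | h
  · by_contra hcon
    exact absurd (hg ha hb h) (not_le.mpr hgab)
  · exact hf hb ha h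

lemma prod_convexOn (m : ℕ) :
    ConvexOn ℝ (Set.Ioi 0) (fun x : ℝ => ∏ j ∈ Finset.range m, max (1 / x - ((j : ℝ) + 1)) 0) := by
  induction m with
  | zero => simpa using convexOn_const (1 : ℝ) (convex_Ioi (0 : ℝ))
  | succ n ih =>
    have key := ih.mul (factor_convexOn ((n : ℝ) + 1))
      (fun x _ => Finset.prod_nonneg fun j _ => factor_nonneg _ _)
      (fun x _ => factor_nonneg _ _)
      (antitone_monovaryOn (prod_antitoneOn n) (factor_antitoneOn _))
    have : (fun x : ℝ => ∏ j ∈ Finset.range (n + 1), max (1 / x - ((j : ℝ) + 1)) 0) =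
        (fun x : ℝ => ∏ j ∈ Finset.range n, max (1 / x - ((j : ℝ) + 1)) 0) *
          fun x : ℝ => max (1 / x - ((n : ℝ) + 1)) 0 := by
      funext x
      simp [Finset.prod_range_succ]
    rw [this]
    exact key

lemma F_convexOn (k r : ℕ) (hr : 3 ≤ r) : ConvexOn ℝ (Set.Ioi 0) (F k r) := by
  have h := (prod_convexOn (r - 1)).smul (c := (k : ℝ) / (Nat.factorial r)) (by positivity)
  constructor
  · exact convex_Ioi 0
  · intro a ha b hb p q hp hq hpq
    have hab : 0 < p * a + q * b := by
      rcases hp.lt_or_eq with hp' | hp'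
      · have : 0 < p * a := mul_pos hp' ha
        have : 0 ≤ q * b := mul_nonneg hq (le_of_lt hb)
        linarith
      · have hq' : q = 1 := by linarith
        simp [← hp', hq']
        exact hb
    simp only [smul_eq_mul]
    rw [F_eq k r hr hab, F_eq k r hr ha, F_eq k r hr hb]
    have := h.2 ha hb hp hq hpq
    simpa [smul_eq_mul, mul_comm] using this

/-- Key inequality: `F y + F (2x) ≤ F x + F (x+y)` for `0 < x ≤ y`. -/
lemma F_key (k r : ℕ) (hr : 3 ≤ r) {x y : ℝ} (hx : 0 < x) (hxy : x ≤ y) :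
    F k r y + F k r (2 * x) ≤ F k r x + F k r (x + y) := by
  have hy : 0 < y := lt_of_lt_of_le hx hxy
  have hcon := F_convexOn k r hr
  have hxmem : x ∈ Set.Ioi (0 : ℝ) := hx
  have hxymem : x + y ∈ Set.Ioi (0 : ℝ) := by simp [Set.mem_Ioi]; linarith
  have hyx : (0 : ℝ) ≤ y - x := by linarith
  have ha0 : (0 : ℝ) ≤ x / y := by positivity
  have hb0 : (0 : ℝ) ≤ (y - x) / y := by positivity
  have hab1 : x / y + (y - x) / y = 1 := by field_simp; ring
  have hba1 : (y - x) / y + x / y = 1 := by field_simp; ring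
  have h1 : F k r y ≤ (x / y) * F k r x + ((y - x) / y) * F k r (x + y) := by
    have := hcon.2 hxmem hxymem ha0 hb0 hab1
    simp only [smul_eq_mul] at this
    have heq : (x / y) * x + ((y - x) / y) * (x + y) = y := by
      field_simp; ring
    rwa [heq] at this
  have h2 : F k r (2 * x) ≤ ((y - x) / y) * F k r x + (x / y) * F k r (x + y) := by
    have := hcon.2 hxmem hxymem hb0 ha0 hba1
    simp only [smul_eq_mul] at this
    have heq : ((y - x) / y) * x + (x / y) * (x + y) = 2 * x := by
      field_simp; ring
    rwa [heq] at this
  have hsub : (y - x) / y = 1 - x / y := by linarith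
  rw [hsub] at h1 h2
  nlinarith [h1, h2]

lemma term_eq_zero {r : ℕ} (hr : 3 ≤ r) {t : ℝ} (ht : 0 < t)
    (hbig : 1 / ((r : ℝ) - 1) < t) : extBinom (1 / t) r = 0 := by
  apply extBinom_eq_zero
  have hr1 : (0 : ℝ) < (r : ℝ) - 1 := by
    have : (3 : ℝ) ≤ (r : ℝ) := by exact_mod_cast hr
    linarith
  have h1 : 1 < t * ((r : ℝ) - 1) := by rwa [div_lt_iff₀ hr1] at hbig
  rw [div_lt_iff₀ ht]
  nlinarith [h1]

lemma summand_summable (k r : ℕ) (hr : 3 ≤ r) {x : ℝ} (hx : 0 < x) :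
    Summable (fun i : ℕ => x * (k : ℝ) * extBinom (1 / (2 ^ i * x)) r) := by
  obtain ⟨N, hN⟩ := pow_unbounded_of_one_lt (1 / ((r : ℝ) - 1) / x) (one_lt_two)
  apply summable_of_ne_finset_zero (s := Finset.range N)
  intro i hi
  have hiN : N ≤ i := by simpa using hi
  have h2 : (1 : ℝ) / ((r : ℝ) - 1) < 2 ^ i * x := by
    have h2N : (2 : ℝ) ^ N ≤ 2 ^ i := pow_le_pow_right₀ one_le_two hiN
    have := (div_lt_iff₀ hx).mp hN
    calc (1 : ℝ) / ((r : ℝ) - 1) < 2 ^ N * x := this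
      _ ≤ 2 ^ i * x := by nlinarith [hx]
  rw [term_eq_zero hr (by positivity) h2]
  ring

lemma gFun_nonneg (k r : ℕ) {x : ℝ} (hx : 0 ≤ x) : 0 ≤ gFun k r x := by
  unfold gFun
  apply mul_nonneg (by norm_num)
  apply tsum_nonneg
  intro i
  have := extBinom_nonneg (1 / (2 ^ i * x)) r
  positivity

lemma gFun_eq_zero (k r : ℕ) (hr : 3 ≤ r) {x : ℝ} (hx : 0 < x)
    (hbig : 1 / ((r : ℝ) - 1) < x) : gFun k r x = 0 := by
  unfold gFun
  have : ∀ i : ℕ, x * (k : ℝ) * extBinom (1 / (2 ^ i * x)) r = 0 := by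
    intro i
    have h1 : (1 : ℝ) ≤ 2 ^ i := one_le_pow₀ one_le_two
    have h2 : 1 / ((r : ℝ) - 1) < 2 ^ i * x := by nlinarith
    rw [term_eq_zero hr (by positivity) h2]
    ring
  rw [tsum_congr this, tsum_zero, mul_zero]

lemma F_eq_zero (k r : ℕ) (hr : 3 ≤ r) {x : ℝ} (hx : 0 < x)
    (hbig : 1 / ((r : ℝ) - 1) < x) : F k r x = 0 := by
  unfold F
  rw [term_eq_zero hr hx hbig]
  ring

/-- Recursion: `g(x) = F(x)/2 + g(2x)/2`. -/
lemma gFun_rec (k r : ℕ) (hr : 3 ≤ r) {x : ℝ} (hx : 0 < x) :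
    gFun k r x = (1 / 2) * F k r x + (1 / 2) * gFun k r (2 * x) := by
  unfold gFun
  have hsum := summand_summable k r hr hx
  rw [hsum.tsum_eq_zero_add]
  have hterm : ∀ i : ℕ, x * (k : ℝ) * extBinom (1 / (2 ^ (i + 1) * x)) r =
      (1 / 2) * ((2 * x) * (k : ℝ) * extBinom (1 / (2 ^ i * (2 * x))) r) := by
    intro i
    have : (2 : ℝ) ^ (i + 1) * x = 2 ^ i * (2 * x) := by ring
    rw [this]
    ring
  have : ∑' i : ℕ, x * (k : ℝ) * extBinom (1 / (2 ^ (i + 1) * x)) r =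
      (1 / 2) * ∑' i : ℕ, (2 * x) * (k : ℝ) * extBinom (1 / (2 ^ i * (2 * x))) r := by
    rw [← tsum_mul_left]
    exact tsum_congr hterm
  rw [this]
  have h0 : x * (k : ℝ) * extBinom (1 / (2 ^ (0 : ℕ) * x)) r = F k r x := by
    norm_num [F]
  rw [h0]
  ring

lemma main_ind (k r : ℕ) (hr : 3 ≤ r) : ∀ n : ℕ, ∀ x y : ℝ, 0 < x → x ≤ y →
    1 / ((r : ℝ) - 1) < 2 ^ n * x →
    gFun k r x + gFun k r y - F k r x ≤ gFun k r (x + y) := by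
  intro n
  induction n with
  | zero =>
    intro x y hx hxy hbig
    rw [pow_zero, one_mul] at hbig
    have hy : 0 < y := lt_of_lt_of_le hx hxy
    rw [gFun_eq_zero k r hr hx hbig, gFun_eq_zero k r hr hy (lt_of_lt_of_le hbig hxy),
      F_eq_zero k r hr hx hbig]
    simpa using gFun_nonneg k r (by linarith : (0:ℝ) ≤ x + y)
  | succ n ih =>
    intro x y hx hxy hbig
    have hy : 0 < y := lt_of_lt_of_le hx hxy
    have hih := ih (2 * x) (2 * y) (by linarith) (by linarith)
      (by rw [show (2:ℝ) ^ n * (2 * x) = 2 ^ (n + 1) * x by ring]; exact hbig)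
    have hkey := F_key k r hr hx hxy
    rw [gFun_rec k r hr hx, gFun_rec k r hr hy, gFun_rec k r hr (by linarith : (0:ℝ) < x + y)]
    rw [show (2 : ℝ) * (x + y) = 2 * x + 2 * y by ring]
    linarith

end GSuper

theorem g_superadditive (k r : ℕ) (hr : 3 ≤ r) (hk : r ≤ k) (x y : ℝ)
    (hx : 0 < x) (hxy : x < y) (hy : y ≤ 1 / ((r : ℝ) - 1)) :
    gFun k r x + gFun k r y - x * (k : ℝ) * extBinom (1 / x) r ≤ gFun k r (x + y) := by
  obtain ⟨n, hn⟩ := pow_unbounded_of_one_lt (1 / ((r : ℝ) - 1) / x) (one_lt_two (α := ℝ))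
  have hbig : 1 / ((r : ℝ) - 1) < 2 ^ n * x := by
    have := (div_lt_iff₀ hx).mp hn
    linarith
  exact GSuper.main_ind k r hr n x y hx (le_of_lt hxy) hbig
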